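/- arXiv:1707.04297 — 3 statements merged into one kernel-verified Lean document; each statement's English description precedes it below -/
import Mathlib

section
/- Let G be a bipartite graph with vertex classes of size t each. If G contains no complete bipartite subgraph K_{s,s} (with s vertices on each side, respecting the bipartition), then G has at most 4·t^{2−1/s} edges. -/
open SimpleGraph Finset

/-- `H` has a copy (an injective graph homomorphism image) in `G`. -/
def Copy {V W : Type*} (H : SimpleGraph W) (G : SimpleGraph V) : Prop :=
  ∃ f : H →g G, Function.Injective f

/-- `G → H`: every red/blue colouring of the edges of `G` (red edges given by a
subgraph `R ≤ G`, blue edges by `G \ R`) contains a monochromatic copy of `H`. -/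
def Arrow {V W : Type*} (G : SimpleGraph V) (H : SimpleGraph W) : Prop :=
  ∀ R : SimpleGraph V, R ≤ G → Copy H R ∨ Copy H (G \ R)

/-- The size-Ramsey number `r̂(H)`. -/
noncomputable def sizeRamsey {W : Type*} (H : SimpleGraph W) : ℕ :=
  sInf {m | ∃ (N : ℕ) (G : SimpleGraph (Fin N)), Arrow G H ∧ G.edgeSet.ncard = m}

/-- The (2-colour) Ramsey number `r(H)`. -/
noncomputable def ramseyNum {W : Type*} (H : SimpleGraph W) : ℕ :=
  sInf {N | Arrow (⊤ : SimpleGraph (Fin N)) H}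

/-- The `k`-th power `H^k` of a graph: edges between distinct vertices at distance at most `k`. -/
def gpow {V : Type*} (H : SimpleGraph V) (k : ℕ) : SimpleGraph V where
  Adj u v := u ≠ v ∧ ∃ p : H.Walk u v, p.length ≤ k
  symm := ⟨by rintro u v ⟨h, p, hp⟩; exact ⟨h.symm, p.reverse, by simpa using hp⟩⟩
  loopless := ⟨by rintro u ⟨h, -⟩; exact h rfl⟩

/-- The complete blow-up of `H` where each vertex is replaced by a clique of size `m`. -/
def blowup {V : Type*} (H : SimpleGraph V) (m : ℕ) : SimpleGraph (V × Fin m) where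
  Adj x y := (x.1 = y.1 ∧ x.2 ≠ y.2) ∨ H.Adj x.1 y.1
  symm := ⟨by rintro x y (⟨h1, h2⟩ | h); exacts [Or.inl ⟨h1.symm, h2.symm⟩, Or.inr h.symm]⟩
  loopless := ⟨by rintro x (⟨-, h⟩ | h); exacts [h rfl, H.loopless.irrefl _ h]⟩

/-- `P_n^k`, the `k`-th power of the path on `n` vertices. -/
def pathPow (n k : ℕ) : SimpleGraph (Fin n) where
  Adj i j := i ≠ j ∧ i.val - j.val ≤ k ∧ j.val - i.val ≤ k
  symm := ⟨by rintro i j ⟨h, h1, h2⟩; exact ⟨h.symm, h2, h1⟩⟩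
  loopless := ⟨by rintro i ⟨h, -⟩; exact h rfl⟩

/-- `C_n^k`, the `k`-th power of the cycle on `n` vertices. -/
def cyclePow (n k : ℕ) : SimpleGraph (ZMod n) where
  Adj i j := i ≠ j ∧ ∃ d : ℕ, 1 ≤ d ∧ d ≤ k ∧ (i = j + (d : ZMod n) ∨ j = i + (d : ZMod n))
  symm := ⟨by rintro i j ⟨h, d, h1, h2, h3⟩; exact ⟨h.symm, d, h1, h2, h3.symm⟩⟩
  loopless := ⟨by rintro i ⟨h, -⟩; exact h rfl⟩
lemma kst_final (s t e : ℕ) (hs : 0 < s) (ht : 0 < t)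
    (hE : (e : ℝ) ^ s ≤ 4 ^ s * (t : ℝ) ^ (2 * s - 1)) :
    (e : ℝ) ≤ 4 * (t : ℝ) ^ (2 - 1 / (s : ℝ)) := by
  have ht0 : (0:ℝ) ≤ t := by positivity
  have hs0 : (s:ℝ) ≠ 0 := by positivity
  have hrw : (4 * (t : ℝ) ^ (2 - 1 / (s : ℝ))) ^ s = 4 ^ s * (t : ℝ) ^ (2 * s - 1) := by
    rw [mul_pow]
    congr 1
    rw [← Real.rpow_natCast ((t:ℝ) ^ (2 - 1 / (s:ℝ))) s, ← Real.rpow_mul ht0]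
    have : (2 - 1 / (s:ℝ)) * s = ((2 * s - 1 : ℕ) : ℝ) := by
      have : ((2 * s - 1 : ℕ) : ℝ) = 2 * s - 1 := by
        push_cast [Nat.cast_sub (by omega : 1 ≤ 2 * s)]; ring
      rw [this]; field_simp
    rw [this, Real.rpow_natCast]
  have h1 : (e : ℝ) ^ s ≤ (4 * (t : ℝ) ^ (2 - 1 / (s : ℝ))) ^ s := by rw [hrw]; exact hE
  exact (pow_le_pow_iff_left₀ (by positivity) (by positivity) (by omega)).mp h1

/-- Kővári–Sós–Turán. A balanced bipartite graph (given by the relation `R`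
between two sides of size `t`) with no `K_{s,s}` has at most `4 t^{2-1/s}` edges. -/
theorem stmt_4 (s t : ℕ) (hs : 0 < s) (R : Fin t → Fin t → Prop)
    (h : ¬ ∃ (S T : Finset (Fin t)), S.card = s ∧ T.card = s ∧ ∀ a ∈ S, ∀ b ∈ T, R a b) :
    ({p : Fin t × Fin t | R p.1 p.2}.ncard : ℝ) ≤ 4 * (t : ℝ) ^ (2 - 1 / (s : ℝ)) := by
  classical
  rcases Nat.eq_zero_or_pos t with rfl | ht
  · have : ({p : Fin 0 × Fin 0 | R p.1 p.2}) = ∅ := Set.eq_empty_of_isEmpty _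
    rw [this]
    simp only [Set.ncard_empty, Nat.cast_zero]
    positivity
  set F : Finset (Fin t × Fin t) := univ.filter (fun p => R p.1 p.2) with hF
  have hset : {p : Fin t × Fin t | R p.1 p.2} = ↑F := by ext p; simp [hF]
  rw [hset, Set.ncard_coe_finset]
  set N : Fin t → Finset (Fin t) := fun a => univ.filter (fun b => R a b) with hN
  set d : Fin t → ℕ := fun a => (N a).card with hd
  set e : ℕ := F.card with he
  -- e = sum of degrees
  have hesum : e = ∑ a : Fin t, d a := by
    rw [he, Finset.card_eq_sum_card_fiberwise (f := Prod.fst) (t := univ) (fun x _ => mem_univ _)]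
    refine Finset.sum_congr rfl fun a _ => ?_
    have : F.filter (fun p => p.1 = a) = (N a).image (fun b => (a, b)) := by
      ext ⟨x, y⟩
      simp only [hF, hN, Finset.mem_filter, Finset.mem_image, Finset.mem_univ, true_and]
      constructor
      · rintro ⟨hr, rfl⟩; exact ⟨y, hr, rfl⟩
      · rintro ⟨b, hb, heq⟩; cases heq; exact ⟨hb, rfl⟩
    rw [this, Finset.card_image_of_injective _ (fun b c hbc => by simpa using hbc)]
  have hdle : ∀ a, d a ≤ t := fun a => by
    simpa [hd, hN] using (Finset.card_filter_le univ (fun b => R a b)).trans (by simp)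
  have het : e ≤ t * t := by
    calc e ≤ (univ : Finset (Fin t × Fin t)).card := Finset.card_filter_le _ _
    _ = t * t := by simp
  -- key counting via no K_{s,s}
  have hbound : ∀ T ∈ (univ : Finset (Fin t)).powersetCard s,
      (univ.filter (fun a => T ⊆ N a)).card ≤ s - 1 := by
    intro T hT
    by_contra hc
    obtain ⟨S, hS, hScard⟩ := Finset.exists_subset_card_eq
      (show s ≤ (univ.filter (fun a => T ⊆ N a)).card by omega)
    refine h ⟨S, T, hScard, (Finset.mem_powersetCard.mp hT).2, fun a ha b hb => ?_⟩
    have := (Finset.mem_filter.mp (hS ha)).2 hb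
    simpa [hN] using this
  have key : ∑ a : Fin t, (d a).choose s ≤ (s - 1) * t.choose s := by
    have hNP : ∀ a, (N a).powersetCard s
        = (Finset.univ.powersetCard s).filter (fun T => T ⊆ N a) := by
      intro a; ext T
      simp only [Finset.mem_powersetCard, Finset.mem_filter, Finset.subset_univ, true_and]
      tauto
    calc ∑ a : Fin t, (d a).choose s
        = ∑ a : Fin t, ((Finset.univ.powersetCard s).filter (fun T => T ⊆ N a)).card := by
          refine Finset.sum_congr rfl fun a _ => ?_
          rw [← hNP, Finset.card_powersetCard]
      _ = ∑ a : Fin t, ∑ T ∈ Finset.univ.powersetCard s, if T ⊆ N a then 1 else 0 := by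
          simp only [Finset.card_filter]
      _ = ∑ T ∈ Finset.univ.powersetCard s, (univ.filter (fun a => T ⊆ N a)).card := by
          rw [Finset.sum_comm]
          exact Finset.sum_congr rfl fun T _ => by simp only [Finset.card_filter]
      _ ≤ ∑ _T ∈ Finset.univ.powersetCard s, (s - 1) := Finset.sum_le_sum hbound
      _ = (s - 1) * t.choose s := by
          rw [Finset.sum_const, Finset.card_powersetCard, smul_eq_mul, mul_comm]; simp
  -- nat chain
  have chain : ∑ a : Fin t, (d a - s) ^ s ≤ s * t ^ s := by
    calc ∑ a : Fin t, (d a - s) ^ s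
        ≤ ∑ a : Fin t, (d a).descFactorial s := Finset.sum_le_sum fun a _ =>
          le_trans (Nat.pow_le_pow_left (by omega) s) (Nat.pow_sub_le_descFactorial _ s)
      _ = ∑ a : Fin t, Nat.factorial s * (d a).choose s := by
          simp [Nat.descFactorial_eq_factorial_mul_choose]
      _ = Nat.factorial s * ∑ a : Fin t, (d a).choose s := by rw [Finset.mul_sum]
      _ ≤ Nat.factorial s * ((s - 1) * t.choose s) := Nat.mul_le_mul_left _ key
      _ = (s - 1) * (Nat.factorial s * t.choose s) := by ring
      _ = (s - 1) * t.descFactorial s := by rw [← Nat.descFactorial_eq_factorial_mul_choose]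
      _ ≤ s * t ^ s := Nat.mul_le_mul (by omega) (Nat.descFactorial_le_pow t s)
  obtain ⟨s', rfl⟩ : ∃ s', s = s' + 1 := ⟨s - 1, by omega⟩
  set s := s' + 1 with hs_def
  -- reduce to the power inequality
  refine kst_final s t e hs ht ?_
  rcases le_or_gt t s with hts | hst
  · -- t ≤ s : trivial bound e ≤ t²
    have h1 : (e : ℝ) ^ s ≤ ((t:ℝ) * t) ^ s := by
      apply pow_le_pow_left₀ (by positivity)
      exact_mod_cast het
    have h2 : ((t:ℝ) * t) ^ s = (t:ℝ) * (t:ℝ) ^ (2 * s - 1) := by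
      rw [mul_pow, ← pow_succ', ← pow_add]
      congr 1
      omega
    have h3 : (t : ℝ) ≤ 4 ^ s := by
      have : t ≤ 4 ^ s := le_trans hts (le_trans (Nat.le_of_lt (Nat.lt_two_pow_self (n := s)))
        (Nat.pow_le_pow_left (by norm_num) s))
      exact_mod_cast this
    calc (e:ℝ) ^ s ≤ (t:ℝ) * (t:ℝ) ^ (2 * s - 1) := by rw [← h2]; exact h1
      _ ≤ 4 ^ s * (t:ℝ) ^ (2 * s - 1) := by
          apply mul_le_mul_of_nonneg_right h3 (by positivity)
  rcases le_or_gt e (2 * s * t) with hcase | hcase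
  · -- small e case, s < t
    have hnat : e ^ s ≤ 4 ^ s * t ^ (2 * s - 1) := by
      have h1 : s ^ s ≤ 2 ^ s * t ^ s' := by
        calc s ^ s = s ^ s' * s := pow_succ s s'
          _ ≤ t ^ s' * 2 ^ s := Nat.mul_le_mul (Nat.pow_le_pow_left (by omega) _)
              (Nat.le_of_lt (Nat.lt_two_pow_self (n := s)))
          _ = 2 ^ s * t ^ s' := Nat.mul_comm _ _
      calc e ^ s ≤ (2 * s * t) ^ s := Nat.pow_le_pow_left hcase s
        _ = 2 ^ s * s ^ s * t ^ s := by rw [mul_pow, mul_pow]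
        _ ≤ 2 ^ s * (2 ^ s * t ^ s') * t ^ s :=
            Nat.mul_le_mul (Nat.mul_le_mul_left _ h1) le_rfl
        _ = 4 ^ s * t ^ (2 * s - 1) := by
            have h4 : (4:ℕ) ^ s = 2 ^ s * 2 ^ s := by rw [← mul_pow]; norm_num
            have ht' : t ^ (2 * s - 1) = t ^ s' * t ^ s := by
              rw [← pow_add]; congr 1; omega
            rw [h4, ht']; ring
    exact_mod_cast hnat
  · -- main case : e > 2 s t
    have hst2 : s * t ≤ e := by
      calc s * t ≤ 2 * (s * t) := Nat.le_mul_of_pos_left _ (by norm_num)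
        _ = 2 * s * t := (mul_assoc 2 s t).symm
        _ ≤ e := le_of_lt hcase
    have hlow : e - s * t ≤ ∑ a : Fin t, (d a - s) := by
      have h1 : ∑ a : Fin t, d a ≤ ∑ a : Fin t, ((d a - s) + s) :=
        Finset.sum_le_sum fun a _ => by omega
      rw [Finset.sum_add_distrib, Finset.sum_const, Finset.card_univ, Fintype.card_fin,
        smul_eq_mul] at h1
      rw [Nat.mul_comm t s] at h1
      omega
    -- Jensen over ℝ
    have jensen : ((∑ a : Fin t, (d a - s) : ℕ) : ℝ) ^ s
        ≤ (t:ℝ) ^ (s - 1) * ((∑ a : Fin t, (d a - s) ^ s : ℕ) : ℝ) := by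
      push_cast
      have := pow_sum_le_card_mul_sum_pow (s := (univ : Finset (Fin t)))
        (f := fun a => ((d a - s : ℕ) : ℝ)) (fun i _ => by positivity) s'
      simpa [hs_def] using this
    have hhalf : (e:ℝ) / 2 ≤ ((e - s * t : ℕ) : ℝ) := by
      rw [Nat.cast_sub hst2]
      have : (2 * s * t : ℕ) ≤ (e:ℕ) := le_of_lt hcase
      have h2 : (2 * (s:ℝ) * t) ≤ e := by exact_mod_cast this
      push_cast [hs_def] at h2 ⊢
      linarith
    have step : ((e:ℝ) / 2) ^ s ≤ (t:ℝ) ^ (s - 1) * ((s:ℝ) * (t:ℝ) ^ s) := by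
      calc ((e:ℝ) / 2) ^ s ≤ (((e - s * t : ℕ) : ℝ)) ^ s :=
            pow_le_pow_left₀ (by positivity) hhalf s
        _ ≤ ((∑ a : Fin t, (d a - s) : ℕ) : ℝ) ^ s := by
            apply pow_le_pow_left₀ (by positivity)
            exact_mod_cast hlow
        _ ≤ (t:ℝ) ^ (s - 1) * ((∑ a : Fin t, (d a - s) ^ s : ℕ) : ℝ) := jensen
        _ ≤ (t:ℝ) ^ (s - 1) * ((s:ℝ) * (t:ℝ) ^ s) := by
            apply mul_le_mul_of_nonneg_left _ (by positivity)
            exact_mod_cast chain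
    have expand : (e:ℝ) ^ s ≤ 2 ^ s * ((s:ℝ) * (t:ℝ) ^ (2 * s - 1)) := by
      have h1 : (e:ℝ) ^ s = 2 ^ s * ((e:ℝ) / 2) ^ s := by
        rw [div_pow, mul_div_cancel₀]
        positivity
      have h2 : (t:ℝ) ^ (s - 1) * ((s:ℝ) * (t:ℝ) ^ s) = (s:ℝ) * (t:ℝ) ^ (2 * s - 1) := by
        rw [← mul_assoc, mul_comm ((t:ℝ) ^ (s-1)) (s:ℝ), mul_assoc, ← pow_add]
        congr 2
        omega
      rw [h1, ← h2]
      exact mul_le_mul_of_nonneg_left step (by positivity)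
    have hs4 : 2 ^ s * (s:ℝ) ≤ 4 ^ s := by
      have : (2:ℝ) ^ s * s ≤ 2 ^ s * 2 ^ s := by
        apply mul_le_mul_of_nonneg_left _ (by positivity)
        exact_mod_cast Nat.le_of_lt (Nat.lt_two_pow_self (n := s))
      calc (2:ℝ) ^ s * s ≤ 2 ^ s * 2 ^ s := this
        _ = 4 ^ s := by rw [← mul_pow]; norm_num
    calc (e:ℝ) ^ s ≤ 2 ^ s * ((s:ℝ) * (t:ℝ) ^ (2 * s - 1)) := expand
      _ = (2 ^ s * (s:ℝ)) * (t:ℝ) ^ (2 * s - 1) := by ring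
      _ ≤ 4 ^ s * (t:ℝ) ^ (2 * s - 1) := by
          apply mul_le_mul_of_nonneg_right hs4 (by positivity)
end

section
/- Let G be a graph on 2an vertices with at most (4a²c)n edges, and suppose every pair of disjoint vertex sets of size εn each is joined by at least one edge. Let H be obtained from G by iteratively deleting a vertex of maximum degree until an vertices remain. Then H has maximum degree at most 4ac, and every pair of disjoint vertex sets of H of size εn each is still joined by at least one edge. -/
open SimpleGraph Finset

private lemma ncard_filter_eq {V : Type*} [Fintype V] [DecidableEq V]
    (G : SimpleGraph V) [DecidableRel G.Adj] (w : V) (T : Finset V) :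
    (G.neighborSet w ∩ ↑T).ncard = (T.filter (fun u => G.Adj w u)).card := by
  rw [show (G.neighborSet w ∩ ↑T) = ↑(T.filter (fun u => G.Adj w u)) by
    ext u; simp [SimpleGraph.neighborSet, and_comm]]
  exact Set.ncard_coe_finset _

/-- deleting vertices of maximum degree from `G` until `an` vertices remain
yields an induced subgraph of maximum degree at most `4ac` that still joins every pair of
disjoint `εn`-sets by an edge. -/
theorem stmt_6 (a c n : ℕ) (ha : 0 < a) (hc : 0 < c) (hn : 0 < n) (ε : ℝ) (hε : 0 < ε)
    (G : SimpleGraph (Fin (2 * a * n)))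
    (hE : G.edgeSet.ncard ≤ 4 * a ^ 2 * c * n)
    (hbig : G.edgeSet.ncard < 4 * a * c * (a * n))
    (hjoin : ∀ S T : Finset (Fin (2 * a * n)), Disjoint S T →
      ε * n ≤ (S.card : ℝ) → ε * n ≤ (T.card : ℝ) → ∃ u ∈ S, ∃ v ∈ T, G.Adj u v)
    (m : ℕ) (S : ℕ → Finset (Fin (2 * a * n)))
    (hS0 : S 0 = Finset.univ)
    (hstep : ∀ i < m, ∃ v ∈ S i,
      (∀ u ∈ S i, (G.neighborSet u ∩ ↑(S i)).ncard ≤ (G.neighborSet v ∩ ↑(S i)).ncard) ∧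
      S (i + 1) = (S i).erase v)
    (hcard : (S m).card = a * n) :
    (∀ v ∈ S m, (G.neighborSet v ∩ ↑(S m)).ncard ≤ 4 * a * c) ∧
    (∀ A B : Finset (Fin (2 * a * n)), A ⊆ S m → B ⊆ S m → Disjoint A B →
      ε * n ≤ (A.card : ℝ) → ε * n ≤ (B.card : ℝ) → ∃ u ∈ A, ∃ v ∈ B, G.Adj u v) :=  by
  classical
  refine ⟨?_, fun A B hA hB hd h1 h2 => hjoin A B hd h1 h2⟩
  by_contra hbad
  push_neg at hbad
  obtain ⟨w, hw, hdeg⟩ := hbad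
  -- subset chain
  have hsub : ∀ i j, i ≤ j → j ≤ m → S j ⊆ S i := by
    intro i j hij hjm
    induction j with
    | zero => simpa [Nat.le_zero.mp hij] using Finset.Subset.refl _
    | succ k ih =>
      rcases Nat.lt_or_ge i (k+1) with h | h
      · obtain ⟨v, hv, -, hvS⟩ := hstep k (lt_of_lt_of_le (Nat.lt_succ_self k) hjm)
        exact (hvS ▸ Finset.erase_subset v (S k)).trans
          (ih (Nat.lt_succ_iff.mp h) (le_of_lt hjm))
      · have : i = k + 1 := le_antisymm hij h
        simp [this]
  -- cardinalities
  have hScard : ∀ i ≤ m, i + (S i).card = 2 * a * n := by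
    intro i him
    induction i with
    | zero => simp [hS0]
    | succ k ih =>
      obtain ⟨v, hv, -, hvS⟩ := hstep k (lt_of_lt_of_le (Nat.lt_succ_self k) him)
      have hpos : 0 < (S k).card := Finset.card_pos.mpr ⟨v, hv⟩
      have ihk := ih (le_of_lt him)
      rw [hvS, Finset.card_erase_of_mem hv]
      omega
  have hm : m = a * n := by
    have h1 := hScard m le_rfl
    have h2 : 2 * a * n = 2 * (a * n) := by ring
    omega
  -- choose deleted vertices
  choose v hv1 hv2 hv3 using fun i : Fin m => hstep i i.2
  -- edge families
  set F : Fin m → Finset (Sym2 (Fin (2*a*n))) :=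
    fun i => ((S i).filter (fun u => G.Adj (v i) u)).image (fun u => s(v i, u)) with hF
  have hFcard : ∀ i, 4 * a * c + 1 ≤ (F i).card := by
    intro i
    have hinj : Set.InjOn (fun u => s(v i, u)) ↑((S i).filter (fun u => G.Adj (v i) u)) := by
      intro x hx y hy hxy
      simp only [Sym2.eq_iff] at hxy
      rcases hxy with ⟨-, h⟩ | ⟨h1, h2⟩
      · exact h
      · exact h2.trans h1
    rw [hF, Finset.card_image_of_injOn hinj, ← ncard_filter_eq]
    have hwSi : w ∈ S i := hsub i m (le_of_lt i.2) le_rfl hw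
    have h1 : (G.neighborSet w ∩ ↑(S m)).ncard ≤ (G.neighborSet w ∩ ↑(S i)).ncard := by
      apply Set.ncard_le_ncard
      · exact Set.inter_subset_inter_right _ (by exact_mod_cast hsub i m (le_of_lt i.2) le_rfl)
      · exact Set.toFinite _
    have h2 := hv2 i w hwSi
    omega
  have hFsub : ∀ i, F i ⊆ G.edgeFinset := by
    intro i e he
    simp only [hF, Finset.mem_image, Finset.mem_filter] at he
    obtain ⟨u, ⟨-, hadj⟩, rfl⟩ := he
    simpa [SimpleGraph.mem_edgeFinset] using hadj
  have hvnot : ∀ i : Fin m, ∀ j, (i : ℕ) < j → j ≤ m → v i ∉ S j := by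
    intro i j hij hjm hmem
    have : v i ∈ S ((i : ℕ) + 1) := hsub ((i:ℕ)+1) j hij hjm hmem
    rw [hv3 i] at this
    exact (Finset.mem_erase.mp this).1 rfl
  have hdisj : ∀ i j : Fin m, i ≠ j → Disjoint (F i) (F j) := by
    have key : ∀ i j : Fin m, (i : ℕ) < (j : ℕ) → Disjoint (F i) (F j) := by
      intro i j hij
      rw [Finset.disjoint_left]
      intro e hei hej
      simp only [hF, Finset.mem_image, Finset.mem_filter] at hei hej
      obtain ⟨u, ⟨huS, -⟩, rfl⟩ := hei
      obtain ⟨u', ⟨hu'S, -⟩, he⟩ := hej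
      have hvj : v j ∈ S (j : ℕ) := hv1 j
      have hvi : v i ∉ S (j : ℕ) := hvnot i j hij (le_of_lt j.2)
      rw [Sym2.eq_iff] at he
      rcases he with ⟨h1, -⟩ | ⟨-, h2⟩
      · exact hvi (h1 ▸ hvj)
      · exact hvi (h2 ▸ hu'S)
    intro i j hij
    rcases lt_or_gt_of_ne (fun h : (i:ℕ) = (j:ℕ) => hij (Fin.ext h)) with h | h
    · exact key i j h
    · exact (key j i h).symm
  have hbi : (Finset.univ : Finset (Fin m)).biUnion F ⊆ G.edgeFinset :=
    Finset.biUnion_subset.mpr fun i _ => hFsub i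
  have hsum : m * (4 * a * c + 1) ≤ G.edgeFinset.card := by
    calc m * (4 * a * c + 1)
        = ∑ i : Fin m, (4 * a * c + 1) := by simp [Finset.sum_const, mul_comm]
      _ ≤ ∑ i : Fin m, (F i).card := Finset.sum_le_sum fun i _ => hFcard i
      _ = ((Finset.univ : Finset (Fin m)).biUnion F).card :=
          (Finset.card_biUnion (fun i _ j _ hij => hdisj i j hij)).symm
      _ ≤ G.edgeFinset.card := Finset.card_le_card hbi
  have hEcard : G.edgeSet.ncard = G.edgeFinset.card := by
    rw [← Set.ncard_coe_finset, SimpleGraph.coe_edgeFinset]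
  rw [hEcard] at hbig
  have : a * n * (4 * a * c + 1) ≤ G.edgeFinset.card := hm ▸ hsum
  nlinarith [hn, ha]
end

section
/- Let s = 2k and suppose (X_i, Y_{i+1}) for 1 ≤ i ≤ n−1 are pairs of s-element sets with X_i, Y_i ⊆ B_i for cliques B₁,…,B_n, where all edges inside each B_i and all edges between X_i and Y_{i+1} are blue. Choose X'_i ⊆ X_i and Y'_i ⊆ Y_i with |X'_i| = |Y'_i| = k and X'_i ∩ Y'_i = ∅ for 2 ≤ i ≤ n−1, and set X'_1 = X_1, Y'_n = Y_n. Then the 2kn vertices of U = ⋃ X'_i ∪ ⋃ Y'_i, ordered so that within each index i the vertices of Y'_i precede those of X'_i and those of X'_i precede those of Y'_{i+1}, form a blue copy of P_{2kn}^k. -/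
open SimpleGraph Finset

/-- Auxiliary: the `t`-th block in the ordering `X'_1, Y'_2, X'_2, Y'_3, …, Y'_n`. -/
def blk {V : Type*} (X' Y' : ℕ → Finset V) (t : ℕ) : Finset V :=
  if t % 2 = 0 then X' (t / 2 + 1) else Y' (t / 2 + 2)

/-- Case 1: the chosen sets `X'_i, Y'_i` inside the blue cliques `B_i`,
ordered with `Y'_i` before `X'_i` before `Y'_{i+1}`, form a blue copy of `P_{2kn}^k`. -/
theorem stmt_13 {V : Type*} [DecidableEq V] (Bl : SimpleGraph V) (k n : ℕ) (hk : 1 ≤ k) (hn : 2 ≤ n)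
    (B X Y X' Y' : ℕ → Finset V)
    (hBdisj : ∀ i j, i ≠ j → Disjoint (B i) (B j))
    (hBclique : ∀ i, 1 ≤ i → i ≤ n → ∀ u ∈ B i, ∀ v ∈ B i, u ≠ v → Bl.Adj u v)
    (hX : ∀ i, 1 ≤ i → i ≤ n - 1 → X i ⊆ B i ∧ (X i).card = 2 * k)
    (hY : ∀ i, 2 ≤ i → i ≤ n → Y i ⊆ B i ∧ (Y i).card = 2 * k)
    (hXY : ∀ i, 1 ≤ i → i ≤ n - 1 → ∀ u ∈ X i, ∀ v ∈ Y (i + 1), Bl.Adj u v)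
    (hX' : ∀ i, 1 ≤ i → i ≤ n - 1 → X' i ⊆ X i)
    (hY' : ∀ i, 2 ≤ i → i ≤ n → Y' i ⊆ Y i)
    (hmid : ∀ i, 2 ≤ i → i ≤ n - 1 →
      (X' i).card = k ∧ (Y' i).card = k ∧ Disjoint (X' i) (Y' i))
    (hX1 : X' 1 = X 1) (hYn : Y' n = Y n)
    (u : Fin (2 * k * n) → V) (hu : Function.Injective u)
    (huU : ∀ j, u j ∈ (Finset.Icc 1 (n - 1)).biUnion X' ∪ (Finset.Icc 2 n).biUnion Y')
    (hord1 : ∀ i, 2 ≤ i → i ≤ n - 1 →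
      ∀ j j' : Fin (2 * k * n), u j ∈ Y' i → u j' ∈ X' i → j < j')
    (hord2 : ∀ i, 1 ≤ i → i ≤ n - 1 →
      ∀ j j' : Fin (2 * k * n), u j ∈ X' i → u j' ∈ Y' (i + 1) → j < j') :
    ∀ j j' : Fin (2 * k * n), (j : ℕ) < (j' : ℕ) → (j' : ℕ) ≤ (j : ℕ) + k →
      Bl.Adj (u j) (u j') := by
  classical
  have hn1 : 1 ≤ n - 1 := by omega
  -- each position lies in some block
  have hex : ∀ j : Fin (2 * k * n), ∃ t, t < 2 * n - 2 ∧ u j ∈ blk X' Y' t := by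
    intro j
    rcases Finset.mem_union.1 (huU j) with h | h
    · rcases Finset.mem_biUnion.1 h with ⟨i, hi, hmem⟩
      rw [Finset.mem_Icc] at hi
      refine ⟨2 * (i - 1), by omega, ?_⟩
      have h2 : 2 * (i - 1) % 2 = 0 := by omega
      have h3 : 2 * (i - 1) / 2 + 1 = i := by omega
      rw [blk, if_pos h2, h3]; exact hmem
    · rcases Finset.mem_biUnion.1 h with ⟨i, hi, hmem⟩
      rw [Finset.mem_Icc] at hi
      refine ⟨2 * i - 3, by omega, ?_⟩
      have h2 : (2 * i - 3) % 2 ≠ 0 := by omega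
      have h3 : (2 * i - 3) / 2 + 2 = i := by omega
      rw [blk, if_neg h2, h3]; exact hmem
  choose f hf1 hf2 using hex
  -- each block is inside some clique B i
  have hblkB : ∀ t, t < 2 * n - 2 → ∃ i, 1 ≤ i ∧ i ≤ n ∧ blk X' Y' t ⊆ B i := by
    intro t ht
    by_cases hp : t % 2 = 0
    · refine ⟨t / 2 + 1, by omega, by omega, ?_⟩
      rw [blk, if_pos hp]
      exact (hX' _ (by omega) (by omega)).trans (hX _ (by omega) (by omega)).1
    · refine ⟨t / 2 + 2, by omega, by omega, ?_⟩
      rw [blk, if_neg hp]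
      exact (hY' _ (by omega) (by omega)).trans (hY _ (by omega) (by omega)).1
  -- consecutive blocks: order and adjacency
  have hstep : ∀ a b : Fin (2 * k * n), f b = f a + 1 → a < b ∧ Bl.Adj (u a) (u b) := by
    intro a b hab
    have ha2 := hf2 a; have hb2 := hf2 b
    have ha1 := hf1 a; have hb1 := hf1 b
    by_cases hp : f a % 2 = 0
    · have hi : u a ∈ X' (f a / 2 + 1) := by rw [blk, if_pos hp] at ha2; exact ha2
      have hq : f b % 2 ≠ 0 := by omega
      have hj2 : f b / 2 + 2 = f a / 2 + 1 + 1 := by omega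
      have hj : u b ∈ Y' (f a / 2 + 1 + 1) := by
        rw [blk, if_neg hq, hj2] at hb2; exact hb2
      have hi1 : 1 ≤ f a / 2 + 1 := by omega
      have hi2 : f a / 2 + 1 ≤ n - 1 := by omega
      refine ⟨hord2 _ hi1 hi2 a b hi hj, ?_⟩
      exact hXY _ hi1 hi2 _ (hX' _ hi1 hi2 hi) _ (hY' _ (by omega) (by omega) hj)
    · have hi : u a ∈ Y' (f a / 2 + 2) := by rw [blk, if_neg hp] at ha2; exact ha2
      have hq : f b % 2 = 0 := by omega
      have hj2 : f b / 2 + 1 = f a / 2 + 2 := by omega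
      have hj : u b ∈ X' (f a / 2 + 2) := by rw [blk, if_pos hq, hj2] at hb2; exact hb2
      have hi1 : 2 ≤ f a / 2 + 2 := by omega
      have hi2 : f a / 2 + 2 ≤ n - 1 := by omega
      have hltab := hord1 _ hi1 hi2 a b hi hj
      refine ⟨hltab, ?_⟩
      have hBi : Y' (f a / 2 + 2) ⊆ B (f a / 2 + 2) :=
        (hY' _ (by omega) (by omega)).trans (hY _ (by omega) (by omega)).1
      have hBi' : X' (f a / 2 + 2) ⊆ B (f a / 2 + 2) :=
        (hX' _ (by omega) (by omega)).trans (hX _ (by omega) (by omega)).1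
      exact hBclique _ (by omega) (by omega) _ (hBi hi) _ (hBi' hj)
        (fun h => (Fin.ne_of_lt hltab) (hu h))
  -- block cardinalities
  have hcap0 : (blk X' Y' 0).card = 2 * k := by
    have h3 : (0 : ℕ) / 2 + 1 = 1 := by norm_num
    rw [blk, if_pos (by norm_num), h3, hX1]
    exact (hX 1 le_rfl hn1).2
  have hcaplast : (blk X' Y' (2 * n - 3)).card = 2 * k := by
    have h2 : (2 * n - 3) % 2 ≠ 0 := by omega
    have h3 : (2 * n - 3) / 2 + 2 = n := by omega
    rw [blk, if_neg h2, h3, hYn]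
    exact (hY n hn le_rfl).2
  have hcapmid : ∀ t, 1 ≤ t → t ≤ 2 * n - 4 → (blk X' Y' t).card = k := by
    intro t h1 h2
    by_cases hp : t % 2 = 0
    · rw [blk, if_pos hp]
      exact (hmid _ (by omega) (by omega)).1
    · rw [blk, if_neg hp]
      exact (hmid _ (by omega) (by omega)).2.1
  have hcapk : ∀ t, t < 2 * n - 2 → k ≤ (blk X' Y' t).card := by
    intro t ht
    rcases eq_or_ne t 0 with rfl | h0
    · rw [hcap0]; omega
    rcases eq_or_ne t (2 * n - 3) with rfl | h1
    · rw [hcaplast]; omega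
    · rw [hcapmid t (by omega) (by omega)]
  have hcapsum : ∑ t ∈ Finset.range (2 * n - 2), (blk X' Y' t).card = 2 * k * n := by
    have e1 : 2 * n - 2 = (2 * n - 4) + 1 + 1 := by omega
    rw [e1, Finset.sum_range_succ, Finset.sum_range_succ']
    have hmidsum : ∑ i ∈ Finset.range (2 * n - 4), (blk X' Y' (i + 1)).card
        = ∑ _i ∈ Finset.range (2 * n - 4), k := by
      apply Finset.sum_congr rfl
      intro i hi
      rw [Finset.mem_range] at hi
      exact hcapmid _ (by omega) (by omega)
    have e3 : (2 * n - 4) + 1 = 2 * n - 3 := by omega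
    rw [hmidsum, Finset.sum_const, smul_eq_mul, hcap0, e3, hcaplast]
    obtain ⟨m, rfl⟩ : ∃ m, n = m + 2 := ⟨n - 2, by omega⟩
    have e4 : 2 * (m + 2) - 4 = 2 * m := by omega
    rw [e4, Finset.card_range]; ring
  -- fibers of f have full cardinality
  have hfib : ∀ t, t < 2 * n - 2 →
      (Finset.univ.filter (fun j : Fin (2 * k * n) => f j = t)).card = (blk X' Y' t).card := by
    have hsum1 : (Finset.univ : Finset (Fin (2 * k * n))).card
        = ∑ t ∈ Finset.range (2 * n - 2),
            (Finset.univ.filter (fun j : Fin (2 * k * n) => f j = t)).card :=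
      Finset.card_eq_sum_card_fiberwise (fun j _ => Finset.mem_range.2 (hf1 j))
    have hle : ∀ t ∈ Finset.range (2 * n - 2),
        (Finset.univ.filter (fun j : Fin (2 * k * n) => f j = t)).card ≤ (blk X' Y' t).card := by
      intro t ht
      apply Finset.card_le_card_of_injOn u
      · intro a ha
        rw [Finset.mem_coe, Finset.mem_filter] at ha
        rw [← ha.2]; exact hf2 a
      · exact fun a _ b _ h => hu h
    have htot : ∑ t ∈ Finset.range (2 * n - 2),
          (Finset.univ.filter (fun j : Fin (2 * k * n) => f j = t)).card
        = ∑ t ∈ Finset.range (2 * n - 2), (blk X' Y' t).card := by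
      rw [← hsum1, hcapsum, Finset.card_univ, Fintype.card_fin]
    intro t ht
    exact (Finset.sum_eq_sum_iff_of_le hle).1 htot t (Finset.mem_range.2 ht)
  -- monotonicity of f along positions
  have hmono : ∀ d (a b : Fin (2 * k * n)), f b = f a + d + 1 → a < b := by
    intro d
    induction d with
    | zero => exact fun a b h => (hstep a b h).1
    | succ d ih =>
      intro a b h
      have ht : f a + 1 < 2 * n - 2 := by have := hf1 b; omega
      have hpos : 0 < (Finset.univ.filter (fun j : Fin (2 * k * n) => f j = f a + 1)).card := by
        have := hcapk _ ht
        rw [← hfib _ ht] at this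
        omega
      obtain ⟨c, hc⟩ := Finset.card_pos.1 hpos
      have hc' : f c = f a + 1 := (Finset.mem_filter.1 hc).2
      exact lt_trans (hstep a c hc').1 (ih c b (by omega))
  have hmono' : ∀ a b : Fin (2 * k * n), f a < f b → a < b := by
    intro a b h
    exact hmono (f b - f a - 1) a b (by omega)
  -- main argument
  intro j j' hlt hle2
  have hne : j ≠ j' := by
    intro h; rw [h] at hlt; omega
  have hfle : f j ≤ f j' := by
    by_contra h
    push_neg at h
    have h2 : (j' : ℕ) < (j : ℕ) := hmono' j' j h
    omega
  rcases Nat.lt_or_ge (f j') (f j + 2) with hc | hc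
  · rcases Nat.eq_or_lt_of_le hfle with heq | hlt2
    · obtain ⟨i, hi1, hi2, hsub⟩ := hblkB (f j) (hf1 j)
      have h1 : u j ∈ B i := hsub (hf2 j)
      have h2 : u j' ∈ B i := hsub (by rw [heq]; exact hf2 j')
      exact hBclique i hi1 hi2 _ h1 _ h2 (fun h => hne (hu h))
    · exact (hstep j j' (by omega)).2
  · exfalso
    have ht : f j + 1 < 2 * n - 2 := by have := hf1 j'; omega
    have hcnt : k ≤ (Finset.univ.filter (fun c : Fin (2 * k * n) => f c = f j + 1)).card := by
      rw [hfib _ ht]; exact hcapk _ ht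
    have hsub : (Finset.univ.filter (fun c : Fin (2 * k * n) => f c = f j + 1)).image Fin.val
        ⊆ Finset.Ioo (j : ℕ) (j' : ℕ) := by
      intro x hx
      rw [Finset.mem_image] at hx
      obtain ⟨c, hc, rfl⟩ := hx
      rw [Finset.mem_filter] at hc
      have h1 : j < c := (hstep j c hc.2).1
      have h2 : c < j' := hmono' c j' (by omega)
      rw [Finset.mem_Ioo]
      exact ⟨h1, h2⟩
    have hcard := Finset.card_le_card hsub
    rw [Finset.card_image_of_injective _ Fin.val_injective, Nat.card_Ioo] at hcard
    omega
end
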